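/- Let n ≥ 3, let σ_{ij} = σ_{ji} (i ≠ j, 1 ≤ i,j ≤ n) be real numbers with σ_{ij} ≤ 0, let μ_k = ∑_{i≠k} σ_{ik}, let R = ∑_k μ_k, and let λ_k = μ_k - R/n. Then ∑_{i≠j} λ_i λ_j σ_{ij} + (R/n)·∑_k λ_k² + ∑_k λ_k³ = ∑_{i<j} (λ_i + λ_j)²·σ_{ij} ≤ 0. -/
import Mathlib


open Finset

/-- Algebraic core of the nonpositive sectional curvature estimate: with
`σ_{ij} = σ_{ji} ≤ 0` (`i ≠ j`), `μ_k = ∑_{i≠k} σ_{ik}`, `R = ∑_k μ_k`,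
`λ_k = μ_k - R/n`, one has
`∑_{i≠j} λ_i λ_j σ_{ij} + (R/n) ∑ λ_k² + ∑ λ_k³ = ∑_{i<j} (λ_i+λ_j)² σ_{ij} ≤ 0`. -/
theorem sectional_nonpos_identity (n : ℕ) (hn : 3 ≤ n) (σ : Fin n → Fin n → ℝ)
    (hsymm : ∀ i j, σ i j = σ j i)
    (hnonpos : ∀ i j, i ≠ j → σ i j ≤ 0)
    (μ : Fin n → ℝ) (hμ : ∀ k, μ k = ∑ i ∈ univ.filter (· ≠ k), σ i k)
    (R : ℝ) (hR : R = ∑ k, μ k)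
    (lam : Fin n → ℝ) (hlam : ∀ k, lam k = μ k - R / n) :
    ((∑ i, ∑ j ∈ univ.filter (· ≠ i), lam i * lam j * σ i j)
        + R / n * ∑ k, (lam k) ^ 2 + ∑ k, (lam k) ^ 3
      = ∑ i, ∑ j ∈ univ.filter (fun j => i < j), (lam i + lam j) ^ 2 * σ i j)
    ∧ ∑ i, ∑ j ∈ univ.filter (fun j => i < j), (lam i + lam j) ^ 2 * σ i j ≤ 0 := by
  constructor
  · -- Step A: R/n * ∑ λ² + ∑ λ³ = ∑_k λ_k² μ_k
    have hA : R / n * ∑ k, (lam k) ^ 2 + ∑ k, (lam k) ^ 3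
        = ∑ k, (lam k) ^ 2 * μ k := by
      rw [Finset.mul_sum, ← Finset.sum_add_distrib]
      refine Finset.sum_congr rfl fun k _ => ?_
      have : μ k = lam k + R / n := by rw [hlam k]; ring
      rw [this]; ring
    -- express ∑ λ² μ as a double sum
    have hA2 : ∑ k, (lam k) ^ 2 * μ k
        = ∑ i, ∑ j ∈ univ.filter (· ≠ i), (lam i) ^ 2 * σ i j := by
      refine Finset.sum_congr rfl fun i _ => ?_
      rw [hμ i, Finset.mul_sum]
      refine Finset.sum_congr rfl fun j _ => ?_
      rw [hsymm j i]
    rw [add_assoc, hA, hA2, ← Finset.sum_add_distrib]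
    have hmerge : ∀ i : Fin n,
        (∑ j ∈ univ.filter (· ≠ i), lam i * lam j * σ i j)
          + ∑ j ∈ univ.filter (· ≠ i), (lam i) ^ 2 * σ i j
        = ∑ j ∈ univ.filter (· ≠ i), (lam i * lam j + (lam i) ^ 2) * σ i j := by
      intro i
      rw [← Finset.sum_add_distrib]
      refine Finset.sum_congr rfl fun j _ => ?_
      ring
    simp_rw [hmerge]
    -- split filter (· ≠ i) into (i < ·) and (· < i)
    have hsplit : ∀ i : Fin n,
        (univ.filter (· ≠ i) : Finset (Fin n))
          = univ.filter (fun j => i < j) ∪ univ.filter (fun j => j < i) := by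
      intro i
      ext j
      simp only [Finset.mem_filter, Finset.mem_union, Finset.mem_univ, true_and]
      constructor
      · intro h; exact (lt_or_gt_of_ne h.symm)
      · rintro (h | h)
        · exact h.ne'
        · exact h.ne
    have hdisj : ∀ i : Fin n,
        Disjoint (univ.filter (fun j => i < j) : Finset (Fin n))
          (univ.filter (fun j => j < i)) := by
      intro i
      rw [Finset.disjoint_left]
      intro j hj hj'
      simp only [Finset.mem_filter] at hj hj'
      exact absurd (hj.2.trans hj'.2) (lt_irrefl i)
    simp_rw [fun i => hsplit i]
    rw [show (∑ i, ∑ j ∈ (univ.filter (fun j => i < j) ∪ univ.filter (fun j => j < i)),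
        (lam i * lam j + (lam i) ^ 2) * σ i j)
      = ∑ i, ((∑ j ∈ univ.filter (fun j => i < j), (lam i * lam j + (lam i) ^ 2) * σ i j)
          + ∑ j ∈ univ.filter (fun j => j < i), (lam i * lam j + (lam i) ^ 2) * σ i j)
      from Finset.sum_congr rfl fun i _ => Finset.sum_union (hdisj i)]
    rw [Finset.sum_add_distrib]
    -- swap the order in the second double sum
    have hswap : (∑ i, ∑ j ∈ univ.filter (fun j => j < i),
          (lam i * lam j + (lam i) ^ 2) * σ i j)
        = ∑ i, ∑ j ∈ univ.filter (fun j => i < j),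
          (lam j * lam i + (lam j) ^ 2) * σ j i := by
      rw [Finset.sum_comm' (s := univ) (t := fun i => univ.filter (fun j => j < i))
        (t' := univ) (s' := fun j => univ.filter (fun i => j < i))]
      intro i j
      simp only [Finset.mem_filter, Finset.mem_univ, true_and]
      tauto
    rw [hswap, ← Finset.sum_add_distrib]
    refine Finset.sum_congr rfl fun i _ => ?_
    rw [← Finset.sum_add_distrib]
    refine Finset.sum_congr rfl fun j _ => ?_
    rw [hsymm j i]
    ring
  · refine Finset.sum_nonpos fun i _ => Finset.sum_nonpos fun j hj => ?_
    have hij : i ≠ j := (Finset.mem_filter.mp hj).2.ne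
    exact mul_nonpos_of_nonneg_of_nonpos (sq_nonneg _) (hnonpos i j hij)
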